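/- For each n ≥ 2, there exists a function g: P(N) → ℝ on N = {a,b,c,x_1,...,x_n} with g(∅)=0 that is submodular and monotone, satisfies g(a:c|b) = g(b:c|a) = 0, satisfies every instance (over disjoint subsets in place of A, B, C, X_1,...,X_p, with a,b,c fixed as the constrained parties) of the constrained inequality C_p for every p ≠ n, but violates the standard instance of C_n. Consequently, C_n cannot be written as a positive linear combination of instances of the basic inequalities (submodularity and monotonicity) and of {C_p}_{p≠n}, plus an arbitrary linear combination of the constraints. -/

import Mathlib

open Finset BigOperators

noncomputable section

/-- A set function is submodular if `f(M₁) + f(M₂) ≥ f(M₁ ∪ M₂) + f(M₁ ∩ M₂)`. -/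
def Submodular {N : Type*} [DecidableEq N] (f : Finset N → ℝ) : Prop :=
  ∀ M₁ M₂ : Finset N, f M₁ + f M₂ ≥ f (M₁ ∪ M₂) + f (M₁ ∩ M₂)

/-- The conditional mutual information `f(α:β|γ)` of a set function. -/
def cmi {N : Type*} [DecidableEq N] (f : Finset N → ℝ) (α β γ : Finset N) : ℝ :=
  -f γ + f (α ∪ γ) + f (β ∪ γ) - f (α ∪ β ∪ γ)

abbrev Idx (n : ℕ) := Sum (Fin 3) (Fin n)

/-- An instance, evaluated on a set function `g`, of the constrained inequality `C_p`
with constrained parties `a = inl 0`, `b = inl 1`, `c = inl 2`, evaluated on disjoint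
subsets `α_1, …, α_p` of `{x_1, …, x_n}`:
`∑ g(a:b|α_i) - (p-1) g(ab:c|∅) + ∑ g(α_i) - g(α_1 … α_p)`. -/
noncomputable def Cexpr {n : ℕ} (g : Finset (Idx n) → ℝ) (p : ℕ)
    (α : Fin p → Finset (Idx n)) : ℝ :=
  (∑ i, cmi g {Sum.inl 0} {Sum.inl 1} (α i)) -
    ((p : ℝ) - 1) * cmi g ({Sum.inl 0, Sum.inl 1} : Finset (Idx n)) {Sum.inl 2} ∅ +
    (∑ i, g (α i)) - g (Finset.univ.biUnion α)


-- ===== auxiliary development =====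
section GenericSubmodular

variable {N : Type*} [DecidableEq N] (g : Finset N → ℝ)

lemma dimin (h : ∀ M : Finset N, ∀ e f, e ∉ M → f ∉ M → e ≠ f →
      g (insert e M) + g (insert f M) ≥ g (insert e (insert f M)) + g M) :
    ∀ (k : ℕ) (M P : Finset N) (e : N), (P \ M).card = k → M ⊆ P → e ∉ P →
      g (insert e P) + g M ≤ g (insert e M) + g P := by
  intro k
  induction k with
  | zero =>
    intro M P e hc hMP he
    have : P \ M = ∅ := Finset.card_eq_zero.mp hc
    have hPM : P ⊆ M := by
      intro x hx
      by_contra hxm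
      exact (Finset.notMem_empty x) (this ▸ Finset.mem_sdiff.mpr ⟨hx, hxm⟩)
    have : M = P := Finset.Subset.antisymm hMP hPM
    subst this; linarith
  | succ k ih =>
    intro M P e hc hMP he
    have hne : (P \ M).Nonempty := Finset.card_pos.mp (by omega)
    obtain ⟨f, hf⟩ := hne
    have hfP : f ∈ P := (Finset.mem_sdiff.mp hf).1
    have hfM : f ∉ M := (Finset.mem_sdiff.mp hf).2
    set P' := P.erase f with hP'
    have hMP' : M ⊆ P' := fun x hx => Finset.mem_erase.mpr ⟨fun hxf => hfM (hxf ▸ hx), hMP hx⟩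
    have hcard : (P' \ M).card = k := by
      rw [hP', Finset.erase_sdiff_comm, Finset.card_erase_of_mem hf, hc]
      omega
    have heP' : e ∉ P' := fun hx => he (Finset.mem_of_mem_erase hx)
    have hef : e ≠ f := fun hef => he (hef ▸ hfP)
    have hfP' : f ∉ P' := Finset.notMem_erase f P
    have h1 := ih M P' e hcard hMP' heP'
    have h2 := h P' e f heP' hfP' hef
    have hfins : insert f P' = P := Finset.insert_erase hfP
    rw [hfins] at h2
    linarith

lemma submodular_of_local
    (h : ∀ M : Finset N, ∀ e f, e ∉ M → f ∉ M → e ≠ f →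
      g (insert e M) + g (insert f M) ≥ g (insert e (insert f M)) + g M) :
    ∀ M₁ M₂ : Finset N, g M₁ + g M₂ ≥ g (M₁ ∪ M₂) + g (M₁ ∩ M₂) := by
  have D := dimin g h
  intro M₁ M₂
  generalize hk : (M₂ \ M₁).card = k
  induction k generalizing M₂ with
  | zero =>
    have : M₂ \ M₁ = ∅ := Finset.card_eq_zero.mp hk
    have hsub : M₂ ⊆ M₁ := by
      intro x hx
      by_contra hxm
      exact (Finset.notMem_empty x) (this ▸ Finset.mem_sdiff.mpr ⟨hx, hxm⟩)
    rw [Finset.union_eq_left.mpr hsub, Finset.inter_eq_right.mpr hsub]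
  | succ k ih =>
    have hne : (M₂ \ M₁).Nonempty := Finset.card_pos.mp (by omega)
    obtain ⟨e, he⟩ := hne
    have heM₂ : e ∈ M₂ := (Finset.mem_sdiff.mp he).1
    have heM₁ : e ∉ M₁ := (Finset.mem_sdiff.mp he).2
    set M₂' := M₂.erase e with hM₂'
    have hcard : (M₂' \ M₁).card = k := by
      rw [hM₂', Finset.erase_sdiff_comm, Finset.card_erase_of_mem he, hk]
      omega
    have IH := ih M₂' hcard
    have hsub : M₂' ⊆ M₁ ∪ M₂' := Finset.subset_union_right
    have heU : e ∉ M₁ ∪ M₂' := by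
      simp only [Finset.mem_union, not_or]
      exact ⟨heM₁, Finset.notMem_erase e M₂⟩
    have hD := D ((M₁ ∪ M₂') \ M₂').card M₂' (M₁ ∪ M₂') e rfl hsub heU
    have h1 : insert e M₂' = M₂ := Finset.insert_erase heM₂
    have h2 : insert e (M₁ ∪ M₂') = M₁ ∪ M₂ := by
      rw [← h1, Finset.union_insert]
    have h3 : M₁ ∩ M₂' = M₁ ∩ M₂ := by
      rw [hM₂', Finset.inter_erase, Finset.erase_eq_of_notMem]
      simp [heM₁]
    rw [h1, h2] at hD
    rw [h3] at IH
    linarith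

lemma monotone_of_local (h : ∀ (M : Finset N) (e : N), g M ≤ g (insert e M)) :
    ∀ A B : Finset N, A ⊆ B → g A ≤ g B := by
  intro A B hAB
  generalize hk : (B \ A).card = k
  induction k generalizing A with
  | zero =>
    have : B \ A = ∅ := Finset.card_eq_zero.mp hk
    have hsub : B ⊆ A := by
      intro x hx
      by_contra hxm
      exact (Finset.notMem_empty x) (this ▸ Finset.mem_sdiff.mpr ⟨hx, hxm⟩)
    rw [Finset.Subset.antisymm hAB hsub]
  | succ k ih =>
    have hne : (B \ A).Nonempty := Finset.card_pos.mp (by omega)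
    obtain ⟨e, he⟩ := hne
    have heB : e ∈ B := (Finset.mem_sdiff.mp he).1
    have heA : e ∉ A := (Finset.mem_sdiff.mp he).2
    have hsub : insert e A ⊆ B := Finset.insert_subset heB hAB
    have hcard : (B \ insert e A).card = k := by
      rw [Finset.sdiff_insert, Finset.card_erase_of_mem he, hk]
      omega
    calc g A ≤ g (insert e A) := h A e
    _ ≤ g B := ih (insert e A) hsub hcard

end GenericSubmodular

namespace CnAux
noncomputable section

def kk (n : ℕ) (M : Finset (Idx n)) : ℕ := (M.filter (fun x => x.isRight)).card
def Uf (n k : ℕ) : ℝ := 2*n+1-2*k - (if k = 1 then 2 else 0)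
def Bf (n k : ℕ) : ℝ := if k ≤ 1 then 3*n-2 else 3*n-3*k
def Gf (n k : ℕ) : ℝ := if k < n then 1 else 0
def Rf (n k : ℕ) : ℝ := 2*n-2*k

def gg (n : ℕ) (M : Finset (Idx n)) : ℝ :=
  16*(kk n M) +
    (if Sum.inl 0 ∈ M ∨ Sum.inl 1 ∈ M then
      Uf n (kk n M) + Bf n (kk n M) + (if Sum.inl 0 ∈ M ∧ Sum.inl 1 ∈ M then Bf n (kk n M) else 0)
        + (if Sum.inl 2 ∈ M then Gf n (kk n M) else 0)
     else (if Sum.inl 2 ∈ M then Rf n (kk n M) else 0))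

variable {n : ℕ}

lemma kk_insert_inl (i : Fin 3) (M : Finset (Idx n)) :
    kk n (insert (Sum.inl i) M) = kk n M := by
  unfold kk; rw [Finset.filter_insert]; simp

lemma kk_insert_inr (i : Fin n) (M : Finset (Idx n)) (h : Sum.inr i ∉ M) :
    kk n (insert (Sum.inr i) M) = kk n M + 1 := by
  unfold kk; rw [Finset.filter_insert]
  simp only [Sum.isRight_inr, if_true]
  rw [Finset.card_insert_of_notMem (fun hx => h (Finset.mem_filter.mp hx).1)]

lemma kk_le (M : Finset (Idx n)) : kk n M ≤ n := by
  have h1 : M.filter (fun x => x.isRight) ⊆ univ.filter (fun x => x.isRight) :=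
    Finset.filter_subset_filter _ (Finset.subset_univ M)
  have h2 : (univ.filter (fun x : Idx n => x.isRight)) = univ.map ⟨Sum.inr, Sum.inr_injective⟩ := by
    ext x; rcases x with x | x <;> simp
  have := Finset.card_le_card h1
  rw [h2] at this
  simpa [kk] using this

lemma mem_insert_ne {x y : Idx n} (M : Finset (Idx n)) (h : x ≠ y) :
    x ∈ insert y M ↔ x ∈ M := by
  simp only [Finset.mem_insert]
  exact ⟨fun hh => hh.resolve_left h, Or.inr⟩

lemma inl_ne_inl {i j : Fin 3} (h : i ≠ j) : (Sum.inl i : Idx n) ≠ Sum.inl j :=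
  fun hh => absurd (Sum.inl_injective hh) h

-- ================= sequence lemmas =================
variable {k : ℕ}

lemma concA : Uf n k + Bf n (k) + (Uf n (k+2) + Bf n (k+2)) ≤ 2*(Uf n (k+1) + Bf n (k+1)) := by
  unfold Uf Bf
  rcases k with _ | _ | k <;> simp <;> push_cast <;> ring_nf <;> try linarith
lemma concP : Uf n k + 2*Bf n (k) + (Uf n (k+2) + 2*Bf n (k+2)) ≤ 2*(Uf n (k+1) + 2*Bf n (k+1)) := by
  unfold Uf Bf
  rcases k with _ | _ | k <;> simp <;> push_cast <;> ring_nf <;> try linarith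
lemma concG (h : k + 2 ≤ n) : Gf n k + Gf n (k+2) ≤ 2 * Gf n (k+1) := by
  unfold Gf
  have h1 : k < n := by omega
  have h2 : k + 1 < n := by omega
  rw [if_pos h1, if_pos h2]
  by_cases h3 : k + 2 < n <;> simp [h3] <;> linarith
lemma concR : Rf n k + Rf n (k+2) ≤ 2 * Rf n (k+1) := by
  unfold Rf; push_cast; ring_nf; linarith
lemma monoUB : Uf n (k+1) + Bf n (k+1) ≤ Uf n k + Bf n k := by
  unfold Uf Bf
  rcases k with _ | _ | k <;> simp <;> push_cast <;> ring_nf <;> try linarith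
lemma monoB : Bf n (k+1) ≤ Bf n k := by
  unfold Bf
  rcases k with _ | _ | k <;> simp <;> push_cast <;> try linarith
lemma monoUBGR : Uf n (k+1) + Bf n (k+1) + Gf n (k+1) - Rf n (k+1) ≤ Uf n k + Bf n k + Gf n k - Rf n k := by
  unfold Uf Bf Gf Rf
  rcases k with _ | _ | k <;>
    · by_cases h1 : (0:ℕ) < n  <;> simp <;> split_ifs <;> push_cast <;> linarith
lemma monoR : Rf n (k+1) ≤ Rf n k := by unfold Rf; push_cast; linarith
lemma monoG : Gf n (k+1) ≤ Gf n k := by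
  unfold Gf; split_ifs with h1 h2 <;> try norm_num
  omega
lemma posU (hn : 2 ≤ n) (h : k ≤ n) : 0 ≤ Uf n k := by
  unfold Uf
  have : (k:ℝ) ≤ n := by exact_mod_cast h
  split_ifs with h1
  · subst h1; push_cast; nlinarith [show (2:ℝ) ≤ n from by exact_mod_cast hn]
  · linarith
lemma posB (hn : 2 ≤ n) (h : k ≤ n) : 0 ≤ Bf n k := by
  unfold Bf
  have : (k:ℝ) ≤ n := by exact_mod_cast h
  have : (2:ℝ) ≤ n := by exact_mod_cast hn
  split_ifs with h1 <;> linarith [show (k:ℝ) ≤ n from by exact_mod_cast h]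
lemma posR (h : k ≤ n) : 0 ≤ Rf n k := by
  unfold Rf; linarith [show (k:ℝ) ≤ n from by exact_mod_cast h]
lemma posG : 0 ≤ Gf n k := by unfold Gf; split_ifs <;> norm_num
lemma posUGR (hn : 2 ≤ n) (h : k ≤ n) : 0 ≤ Uf n k + Gf n k - Rf n k := by
  unfold Uf Gf Rf
  have hkr : (k:ℝ) ≤ n := by exact_mod_cast h
  have hnr : (2:ℝ) ≤ n := by exact_mod_cast hn
  by_cases h1 : k < n
  · rw [if_pos h1]
    have : (k:ℝ) + 1 ≤ n := by exact_mod_cast h1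
    split_ifs <;> linarith
  · have hk : k = n := by omega
    rw [if_neg h1]
    split_ifs with h2
    · exfalso; omega
    · have hke : (k:ℝ) = n := by exact_mod_cast hk
      linarith
lemma posRG (h : k ≤ n) : Gf n k ≤ Rf n k := by
  unfold Gf Rf
  split_ifs with h1
  · have : (k:ℝ) + 1 ≤ n := by exact_mod_cast h1
    linarith
  · have hkn : (k:ℝ) ≤ n := by exact_mod_cast h
    linarith
lemma slopeUB : Uf n k + Bf n k ≤ 5 + (Uf n (k+1) + Bf n (k+1)) := by
  unfold Uf Bf
  rcases k with _ | _ | k <;> simp <;> push_cast <;> ring_nf <;> try linarith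
lemma slopeUBB : Uf n k + 2*Bf n k ≤ 10 + (Uf n (k+1) + 2*Bf n (k+1)) := by
  unfold Uf Bf
  rcases k with _ | _ | k <;> simp <;> push_cast <;> ring_nf <;> try linarith
lemma slopeG : Gf n k ≤ 1 + Gf n (k+1) := by
  unfold Gf; split_ifs <;> norm_num
lemma slopeR : Rf n k ≤ 2 + Rf n (k+1) := by unfold Rf; push_cast; linarith

-- ================= local submodularity cases =================

lemma loc_xx (hn : 2 ≤ n) (M : Finset (Idx n)) (i j : Fin n) (hi : Sum.inr i ∉ M)
    (hj : Sum.inr j ∉ M) (hij : i ≠ j) :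
    gg n (insert (Sum.inr i) M) + gg n (insert (Sum.inr j) M) ≥
      gg n (insert (Sum.inr i) (insert (Sum.inr j) M)) + gg n M := by
  have hij' : Sum.inr i ∉ insert (Sum.inr j) M := by
    simp only [Finset.mem_insert]
    push_neg
    exact ⟨by simp [hij], hi⟩
  have k1 : kk n (insert (Sum.inr i) M) = kk n M + 1 := kk_insert_inr i M hi
  have k2 : kk n (insert (Sum.inr j) M) = kk n M + 1 := kk_insert_inr j M hj
  have k3 : kk n (insert (Sum.inr i) (insert (Sum.inr j) M)) = kk n M + 2 := by
    rw [kk_insert_inr i _ hij', kk_insert_inr j M hj]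
  have hb : kk n M + 2 ≤ n := by
    have := kk_le (insert (Sum.inr i) (insert (Sum.inr j) M))
    omega
  unfold gg
  rw [k1, k2, k3]
  simp only [Finset.mem_insert, reduceCtorEq, false_or]
  set k := kk n M with hk
  by_cases pab : (Sum.inl 0 : Idx n) ∈ M ∨ (Sum.inl 1 : Idx n) ∈ M
  · by_cases pc : (Sum.inl 2 : Idx n) ∈ M
    · by_cases pboth : (Sum.inl 0 : Idx n) ∈ M ∧ (Sum.inl 1 : Idx n) ∈ M
      · simp only [pab, pc, pboth, if_true, and_self, or_self]
        have h1 := concP (n := n) (k := k)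
        have h2 := concG (n := n) (k := k) hb
        push_cast
        linarith
      · simp only [pab, pc, pboth, if_true, if_false, and_self, or_self]
        have h1 := concA (n := n) (k := k)
        have h2 := concG (n := n) (k := k) hb
        push_cast
        linarith
    · by_cases pboth : (Sum.inl 0 : Idx n) ∈ M ∧ (Sum.inl 1 : Idx n) ∈ M
      · simp only [pab, pc, pboth, if_true, if_false, and_self, or_self]
        have h1 := concP (n := n) (k := k)
        push_cast
        linarith
      · simp only [pab, pc, pboth, if_true, if_false, and_self, or_self]
        have h1 := concA (n := n) (k := k)
        push_cast
        linarith
  · by_cases pc : (Sum.inl 2 : Idx n) ∈ M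
    · simp only [pab, pc, if_true, if_false]
      have h1 := concR (n := n) (k := k)
      push_cast
      linarith
    · simp only [pab, pc, if_true, if_false]
      push_cast
      linarith

lemma loc_xa (hn : 2 ≤ n) (M : Finset (Idx n)) (i : Fin n) (hi : Sum.inr i ∉ M)
    (ha : Sum.inl 0 ∉ M) :
    gg n (insert (Sum.inr i) M) + gg n (insert (Sum.inl 0) M) ≥
      gg n (insert (Sum.inr i) (insert (Sum.inl 0) M)) + gg n M := by
  have hi' : Sum.inr i ∉ insert (Sum.inl 0) M := by
    simp only [Finset.mem_insert, reduceCtorEq, false_or]; exact hi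
  have k1 : kk n (insert (Sum.inr i) M) = kk n M + 1 := kk_insert_inr i M hi
  have k2 : kk n (insert (Sum.inl 0) M) = kk n M := kk_insert_inl 0 M
  have k3 : kk n (insert (Sum.inr i) (insert (Sum.inl 0) M)) = kk n M + 1 := by
    rw [kk_insert_inr i _ hi', kk_insert_inl 0 M]
  unfold gg
  rw [k1, k2, k3]
  simp only [Finset.mem_insert, reduceCtorEq, false_or, Sum.inl.injEq, Fin.reduceEq,
    true_or, true_and, ha, false_or, false_and, or_false, and_false, if_true, if_false]
  set k := kk n M with hk
  by_cases pb : (Sum.inl 1 : Idx n) ∈ M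
  · by_cases pc : (Sum.inl 2 : Idx n) ∈ M
    · simp only [pb, pc, if_true]
      have := monoB (n := n) (k := k); push_cast; linarith
    · simp only [pb, pc, if_true, if_false]
      have := monoB (n := n) (k := k); push_cast; linarith
  · by_cases pc : (Sum.inl 2 : Idx n) ∈ M
    · simp only [pb, pc, if_true, if_false]
      have := monoUBGR (n := n) (k := k); push_cast; linarith
    · simp only [pb, pc, if_true, if_false]
      have := monoUB (n := n) (k := k); push_cast; linarith

lemma loc_xb (hn : 2 ≤ n) (M : Finset (Idx n)) (i : Fin n) (hi : Sum.inr i ∉ M)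
    (hb : Sum.inl 1 ∉ M) :
    gg n (insert (Sum.inr i) M) + gg n (insert (Sum.inl 1) M) ≥
      gg n (insert (Sum.inr i) (insert (Sum.inl 1) M)) + gg n M := by
  have hi' : Sum.inr i ∉ insert (Sum.inl 1) M := by
    simp only [Finset.mem_insert, reduceCtorEq, false_or]; exact hi
  have k1 : kk n (insert (Sum.inr i) M) = kk n M + 1 := kk_insert_inr i M hi
  have k2 : kk n (insert (Sum.inl 1) M) = kk n M := kk_insert_inl 1 M
  have k3 : kk n (insert (Sum.inr i) (insert (Sum.inl 1) M)) = kk n M + 1 := by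
    rw [kk_insert_inr i _ hi', kk_insert_inl 1 M]
  unfold gg
  rw [k1, k2, k3]
  simp only [Finset.mem_insert, reduceCtorEq, false_or, Sum.inl.injEq, Fin.reduceEq,
    true_or, or_true, true_and, and_true, hb, false_or, false_and, or_false, and_false,
    if_true, if_false]
  set k := kk n M with hk
  by_cases pa : (Sum.inl 0 : Idx n) ∈ M
  · by_cases pc : (Sum.inl 2 : Idx n) ∈ M
    · simp only [pa, pc, if_true]
      have := monoB (n := n) (k := k); push_cast; linarith
    · simp only [pa, pc, if_true, if_false]
      have := monoB (n := n) (k := k); push_cast; linarith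
  · by_cases pc : (Sum.inl 2 : Idx n) ∈ M
    · simp only [pa, pc, if_true, if_false]
      have := monoUBGR (n := n) (k := k); push_cast; linarith
    · simp only [pa, pc, if_true, if_false]
      have := monoUB (n := n) (k := k); push_cast; linarith

lemma loc_xc (hn : 2 ≤ n) (M : Finset (Idx n)) (i : Fin n) (hi : Sum.inr i ∉ M)
    (hc : Sum.inl 2 ∉ M) :
    gg n (insert (Sum.inr i) M) + gg n (insert (Sum.inl 2) M) ≥
      gg n (insert (Sum.inr i) (insert (Sum.inl 2) M)) + gg n M := by
  have hi' : Sum.inr i ∉ insert (Sum.inl 2) M := by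
    simp only [Finset.mem_insert, reduceCtorEq, false_or]; exact hi
  have k1 : kk n (insert (Sum.inr i) M) = kk n M + 1 := kk_insert_inr i M hi
  have k2 : kk n (insert (Sum.inl 2) M) = kk n M := kk_insert_inl 2 M
  have k3 : kk n (insert (Sum.inr i) (insert (Sum.inl 2) M)) = kk n M + 1 := by
    rw [kk_insert_inr i _ hi', kk_insert_inl 2 M]
  unfold gg
  rw [k1, k2, k3]
  simp only [Finset.mem_insert, reduceCtorEq, false_or, Sum.inl.injEq, Fin.reduceEq,
    true_or, or_true, true_and, and_true, hc, false_or, false_and, or_false, and_false,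
    if_true, if_false]
  set k := kk n M with hk
  by_cases pab : (Sum.inl 0 : Idx n) ∈ M ∨ (Sum.inl 1 : Idx n) ∈ M
  · simp only [pab, if_true]
    have := monoG (n := n) (k := k); push_cast; linarith
  · simp only [pab, if_false]
    have := monoR (n := n) (k := k); push_cast; linarith

lemma loc_ab (hn : 2 ≤ n) (M : Finset (Idx n)) (ha : Sum.inl 0 ∉ M) (hb : Sum.inl 1 ∉ M) :
    gg n (insert (Sum.inl 0) M) + gg n (insert (Sum.inl 1) M) ≥
      gg n (insert (Sum.inl 0) (insert (Sum.inl 1) M)) + gg n M := by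
  have k1 : kk n (insert (Sum.inl 0) M) = kk n M := kk_insert_inl 0 M
  have k2 : kk n (insert (Sum.inl 1) M) = kk n M := kk_insert_inl 1 M
  have k3 : kk n (insert (Sum.inl 0) (insert (Sum.inl 1) M)) = kk n M := by
    rw [kk_insert_inl 0 _, kk_insert_inl 1 M]
  have hkn := kk_le M
  unfold gg
  rw [k1, k2, k3]
  simp only [Finset.mem_insert, reduceCtorEq, false_or, Sum.inl.injEq, Fin.reduceEq,
    true_or, or_true, true_and, and_true, ha, hb, false_or, false_and, or_false, and_false,
    if_true, if_false]
  set k := kk n M with hk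
  by_cases pc : (Sum.inl 2 : Idx n) ∈ M
  · simp only [pc, if_true]
    have h1 := posUGR (n := n) (k := k) hn hkn
    have h2 := posB (n := n) (k := k) hn hkn
    linarith
  · simp only [pc, if_false]
    have h1 := posU (n := n) (k := k) hn hkn
    linarith

lemma loc_ac (hn : 2 ≤ n) (M : Finset (Idx n)) (ha : Sum.inl 0 ∉ M) (hc : Sum.inl 2 ∉ M) :
    gg n (insert (Sum.inl 0) M) + gg n (insert (Sum.inl 2) M) ≥
      gg n (insert (Sum.inl 0) (insert (Sum.inl 2) M)) + gg n M := by
  have k1 : kk n (insert (Sum.inl 0) M) = kk n M := kk_insert_inl 0 M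
  have k2 : kk n (insert (Sum.inl 2) M) = kk n M := kk_insert_inl 2 M
  have k3 : kk n (insert (Sum.inl 0) (insert (Sum.inl 2) M)) = kk n M := by
    rw [kk_insert_inl 0 _, kk_insert_inl 2 M]
  have hkn := kk_le M
  unfold gg
  rw [k1, k2, k3]
  simp only [Finset.mem_insert, reduceCtorEq, false_or, Sum.inl.injEq, Fin.reduceEq,
    true_or, or_true, true_and, and_true, ha, hc, false_or, false_and, or_false, and_false,
    if_true, if_false]
  set k := kk n M with hk
  by_cases pb : (Sum.inl 1 : Idx n) ∈ M
  · simp only [pb, if_true]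
    linarith
  · simp only [pb, if_false]
    have h1 := posRG (n := n) (k := k) hkn
    linarith

lemma loc_bc (hn : 2 ≤ n) (M : Finset (Idx n)) (hb : Sum.inl 1 ∉ M) (hc : Sum.inl 2 ∉ M) :
    gg n (insert (Sum.inl 1) M) + gg n (insert (Sum.inl 2) M) ≥
      gg n (insert (Sum.inl 1) (insert (Sum.inl 2) M)) + gg n M := by
  have k1 : kk n (insert (Sum.inl 1) M) = kk n M := kk_insert_inl 1 M
  have k2 : kk n (insert (Sum.inl 2) M) = kk n M := kk_insert_inl 2 M
  have k3 : kk n (insert (Sum.inl 1) (insert (Sum.inl 2) M)) = kk n M := by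
    rw [kk_insert_inl 1 _, kk_insert_inl 2 M]
  have hkn := kk_le M
  unfold gg
  rw [k1, k2, k3]
  simp only [Finset.mem_insert, reduceCtorEq, false_or, Sum.inl.injEq, Fin.reduceEq,
    true_or, or_true, true_and, and_true, hb, hc, false_or, false_and, or_false, and_false,
    if_true, if_false]
  set k := kk n M with hk
  by_cases pa : (Sum.inl 0 : Idx n) ∈ M
  · simp only [pa, if_true]
    linarith
  · simp only [pa, if_false]
    have h1 := posRG (n := n) (k := k) hkn
    linarith


lemma insert_swap (e f : Idx n) (M : Finset (Idx n)) :
    insert e (insert f M) = insert f (insert e M) := by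
  ext x; simp only [Finset.mem_insert]; tauto

lemma comm_help {x y z w : ℝ} (h : y + x ≥ z + w) : x + y ≥ z + w := by linarith

lemma gg_local (hn : 2 ≤ n) :
    ∀ (M : Finset (Idx n)) (e f : Idx n), e ∉ M → f ∉ M → e ≠ f →
      gg n (insert e M) + gg n (insert f M) ≥ gg n (insert e (insert f M)) + gg n M := by
  intro M e f he hf hef
  rcases e with ei | xi <;> rcases f with fj | yj
  · fin_cases ei <;> fin_cases fj
    · exact absurd rfl hef
    · exact loc_ab hn M he hf
    · exact loc_ac hn M he hf
    · rw [insert_swap]; exact comm_help (loc_ab hn M hf he)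
    · exact absurd rfl hef
    · exact loc_bc hn M he hf
    · rw [insert_swap]; exact comm_help (loc_ac hn M hf he)
    · rw [insert_swap]; exact comm_help (loc_bc hn M hf he)
    · exact absurd rfl hef
  · fin_cases ei
    · rw [insert_swap]; exact comm_help (loc_xa hn M yj hf he)
    · rw [insert_swap]; exact comm_help (loc_xb hn M yj hf he)
    · rw [insert_swap]; exact comm_help (loc_xc hn M yj hf he)
  · fin_cases fj
    · exact loc_xa hn M xi he hf
    · exact loc_xb hn M xi he hf
    · exact loc_xc hn M xi he hf
  · have hxy : xi ≠ yj := fun h => hef (by rw [h])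
    exact loc_xx hn M xi yj he hf hxy

lemma mono_a (hn : 2 ≤ n) (M : Finset (Idx n)) (he : Sum.inl 0 ∉ M) :
    gg n M ≤ gg n (insert (Sum.inl 0) M) := by
  have hkn := kk_le M
  have k1 : kk n (insert (Sum.inl 0) M) = kk n M := kk_insert_inl 0 M
  unfold gg
  rw [k1]
  simp only [Finset.mem_insert, Sum.inl.injEq, Fin.reduceEq, true_or, or_true, true_and,
    and_true, he, false_or, false_and, or_false, and_false, if_true, if_false]
  set k := kk n M with hk
  by_cases pb : (Sum.inl 1 : Idx n) ∈ M
  · by_cases pc : (Sum.inl 2 : Idx n) ∈ M <;> simp only [pb, pc, if_true, if_false] <;>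
      linarith [posB (n := n) (k := k) hn hkn]
  · by_cases pc : (Sum.inl 2 : Idx n) ∈ M <;> simp only [pb, pc, if_true, if_false] <;>
      linarith [posB (n := n) (k := k) hn hkn, posU (n := n) (k := k) hn hkn,
        posUGR (n := n) (k := k) hn hkn]

lemma mono_b (hn : 2 ≤ n) (M : Finset (Idx n)) (he : Sum.inl 1 ∉ M) :
    gg n M ≤ gg n (insert (Sum.inl 1) M) := by
  have hkn := kk_le M
  have k1 : kk n (insert (Sum.inl 1) M) = kk n M := kk_insert_inl 1 M
  unfold gg
  rw [k1]
  simp only [Finset.mem_insert, Sum.inl.injEq, Fin.reduceEq, true_or, or_true, true_and,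
    and_true, he, false_or, false_and, or_false, and_false, if_true, if_false]
  set k := kk n M with hk
  by_cases pa : (Sum.inl 0 : Idx n) ∈ M
  · by_cases pc : (Sum.inl 2 : Idx n) ∈ M <;> simp only [pa, pc, if_true, if_false] <;>
      linarith [posB (n := n) (k := k) hn hkn]
  · by_cases pc : (Sum.inl 2 : Idx n) ∈ M <;> simp only [pa, pc, if_true, if_false] <;>
      linarith [posB (n := n) (k := k) hn hkn, posU (n := n) (k := k) hn hkn,
        posUGR (n := n) (k := k) hn hkn]

lemma mono_c (hn : 2 ≤ n) (M : Finset (Idx n)) (he : Sum.inl 2 ∉ M) :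
    gg n M ≤ gg n (insert (Sum.inl 2) M) := by
  have hkn := kk_le M
  have k1 : kk n (insert (Sum.inl 2) M) = kk n M := kk_insert_inl 2 M
  unfold gg
  rw [k1]
  simp only [Finset.mem_insert, Sum.inl.injEq, Fin.reduceEq, true_or, or_true, true_and,
    and_true, he, false_or, false_and, or_false, and_false, if_true, if_false]
  set k := kk n M with hk
  by_cases pab : (Sum.inl 0 : Idx n) ∈ M ∨ (Sum.inl 1 : Idx n) ∈ M
  · simp only [pab, if_true]
    linarith [posG (n := n) (k := k)]
  · simp only [pab, if_false]
    linarith [posR (n := n) (k := k) hkn]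

lemma mono_x (hn : 2 ≤ n) (M : Finset (Idx n)) (i : Fin n) (he : Sum.inr i ∉ M) :
    gg n M ≤ gg n (insert (Sum.inr i) M) := by
  have hkn := kk_le M
  have k1 : kk n (insert (Sum.inr i) M) = kk n M + 1 := kk_insert_inr i M he
  unfold gg
  rw [k1]
  simp only [Finset.mem_insert, reduceCtorEq, false_or]
  set k := kk n M with hk
  by_cases pab : (Sum.inl 0 : Idx n) ∈ M ∨ (Sum.inl 1 : Idx n) ∈ M
  · by_cases pboth : (Sum.inl 0 : Idx n) ∈ M ∧ (Sum.inl 1 : Idx n) ∈ M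
    · by_cases pc : (Sum.inl 2 : Idx n) ∈ M <;>
        simp only [pab, pboth, pc, or_self, and_self, if_true, if_false] <;> push_cast <;>
        linarith [slopeUBB (n := n) (k := k), slopeG (n := n) (k := k)]
    · by_cases pc : (Sum.inl 2 : Idx n) ∈ M <;>
        simp only [pab, pboth, pc, or_self, and_self, if_true, if_false] <;> push_cast <;>
        linarith [slopeUB (n := n) (k := k), slopeG (n := n) (k := k)]
  · by_cases pc : (Sum.inl 2 : Idx n) ∈ M <;>
      simp only [pab, pc, if_true, if_false] <;> push_cast <;>
      linarith [slopeR (n := n) (k := k)]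

lemma gg_mono_step (hn : 2 ≤ n) :
    ∀ (M : Finset (Idx n)) (e : Idx n), gg n M ≤ gg n (insert e M) := by
  intro M e
  by_cases he : e ∈ M
  · rw [Finset.insert_eq_self.mpr he]
  rcases e with ei | i
  · fin_cases ei
    · exact mono_a hn M he
    · exact mono_b hn M he
    · exact mono_c hn M he
  · exact mono_x hn M i he

-- ========== evaluations on letter-free sets ==========

lemma no_letter {S : Finset (Idx n)} (hS : ∀ x ∈ S, x.isRight = true) (i : Fin 3) :
    Sum.inl i ∉ S := fun h => by simpa using hS _ h

lemma kk_right {S : Finset (Idx n)} (hS : ∀ x ∈ S, x.isRight = true) : kk n S = S.card := by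
  unfold kk
  congr 1
  exact Finset.filter_true_of_mem fun x hx => by simpa using hS x hx

lemma gg_eval_S {S : Finset (Idx n)} (hS : ∀ x ∈ S, x.isRight = true) :
    gg n S = 16 * S.card := by
  unfold gg
  rw [kk_right hS]
  simp [no_letter hS 0, no_letter hS 1, no_letter hS 2]

lemma gg_eval_aS {S : Finset (Idx n)} (hS : ∀ x ∈ S, x.isRight = true) :
    gg n ({Sum.inl 0} ∪ S) = 16 * S.card + (Uf n S.card + Bf n S.card) := by
  unfold gg
  have hk : kk n ({Sum.inl 0} ∪ S) = S.card := by
    unfold kk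
    rw [Finset.filter_union]
    rw [Finset.filter_singleton]
    simp only [Sum.isRight_inl, Bool.false_eq_true, if_false, Finset.empty_union]
    rw [Finset.filter_true_of_mem fun x hx => by simpa using hS x hx]
  rw [hk]
  simp [no_letter hS 0, no_letter hS 1, no_letter hS 2, Finset.mem_union]

lemma gg_eval_bS {S : Finset (Idx n)} (hS : ∀ x ∈ S, x.isRight = true) :
    gg n ({Sum.inl 1} ∪ S) = 16 * S.card + (Uf n S.card + Bf n S.card) := by
  unfold gg
  have hk : kk n ({Sum.inl 1} ∪ S) = S.card := by
    unfold kk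
    rw [Finset.filter_union, Finset.filter_singleton]
    simp only [Sum.isRight_inl, Bool.false_eq_true, if_false, Finset.empty_union]
    rw [Finset.filter_true_of_mem fun x hx => by simpa using hS x hx]
  rw [hk]
  simp [no_letter hS 0, no_letter hS 1, no_letter hS 2, Finset.mem_union]

lemma gg_eval_abS {S : Finset (Idx n)} (hS : ∀ x ∈ S, x.isRight = true) :
    gg n ({Sum.inl 0} ∪ {Sum.inl 1} ∪ S) = 16 * S.card + (Uf n S.card + 2 * Bf n S.card) := by
  unfold gg
  have hk : kk n ({Sum.inl 0} ∪ {Sum.inl 1} ∪ S) = S.card := by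
    unfold kk
    rw [Finset.filter_union, Finset.filter_union, Finset.filter_singleton, Finset.filter_singleton]
    simp only [Sum.isRight_inl, Bool.false_eq_true, if_false, Finset.empty_union]
    rw [Finset.filter_true_of_mem fun x hx => by simpa using hS x hx]
  rw [hk]
  simp only [Finset.mem_union, Finset.mem_singleton, Sum.inl.injEq, Fin.reduceEq,
    no_letter hS 0, no_letter hS 1, no_letter hS 2, true_or, or_true, or_false, false_or,
    true_and, and_true, if_true, and_self, if_false]
  ring

lemma cmi_ab_eval {S : Finset (Idx n)} (hS : ∀ x ∈ S, x.isRight = true) :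
    cmi (gg n) {Sum.inl 0} {Sum.inl 1} S = Uf n S.card := by
  unfold cmi
  rw [gg_eval_S hS, gg_eval_aS hS, gg_eval_bS hS, gg_eval_abS hS]
  ring

lemma cmi_acb_eval (hn : 2 ≤ n) :
    cmi (gg n) {Sum.inl 0} {Sum.inl 2} ({Sum.inl 1} : Finset (Idx n)) = 0 := by
  have h0 : 0 < n := by omega
  unfold cmi gg kk
  norm_num [Finset.filter_union, Finset.filter_singleton, Finset.filter_insert, Finset.mem_union, Gf, Fin.ext_iff]
  rw [if_pos h0]
  ring

lemma cmi_bca_eval (hn : 2 ≤ n) :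
    cmi (gg n) {Sum.inl 1} {Sum.inl 2} ({Sum.inl 0} : Finset (Idx n)) = 0 := by
  have h0 : 0 < n := by omega
  unfold cmi gg kk
  norm_num [Finset.filter_union, Finset.filter_singleton, Finset.filter_insert, Finset.mem_union, Gf, Fin.ext_iff]
  rw [if_pos h0]
  ring

lemma cmi_abc_eval (hn : 2 ≤ n) :
    cmi (gg n) ({Sum.inl 0, Sum.inl 1} : Finset (Idx n)) {Sum.inl 2} ∅ = 2*n - 1 := by
  have h0 : 0 < n := by omega
  unfold cmi gg kk
  norm_num [Finset.filter_union, Finset.filter_singleton, Finset.filter_insert,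
    Finset.mem_union, Finset.mem_insert, Gf, Uf, Bf, Rf, Fin.ext_iff]
  omega

lemma gg_empty : gg n (∅ : Finset (Idx n)) = 0 := by
  unfold gg kk
  simp


lemma sumU (p : ℕ) (κ : Fin p → ℕ) :
    ∑ i, Uf n (κ i) = p*(2*(n:ℝ)+1) - 2*(∑ i, (κ i : ℝ))
      - 2*((Finset.univ.filter (fun i => κ i = 1)).card : ℝ) := by
  unfold Uf
  rw [Finset.sum_sub_distrib]
  have h1 : ∑ i, (2*(n:ℝ)+1-2*(κ i)) = p*(2*(n:ℝ)+1) - 2*(∑ i, (κ i : ℝ)) := by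
    rw [Finset.sum_sub_distrib, Finset.sum_const, Finset.card_univ, Finset.mul_sum]
    simp only [Fintype.card_fin, nsmul_eq_mul]
  have h2 : ∑ i, (if κ i = 1 then (2:ℝ) else 0)
      = 2*((Finset.univ.filter (fun i => κ i = 1)).card : ℝ) := by
    rw [← Finset.sum_filter, Finset.sum_const, nsmul_eq_mul]
    ring
  rw [h1, h2]

lemma Cexpr_ge (hn : 2 ≤ n) (p : ℕ) (hp : p ≠ n) (α : Fin p → Finset (Idx n))
    (hX : ∀ i, ∀ x ∈ α i, x.isRight = true)
    (hd : ∀ i j, i ≠ j → Disjoint (α i) (α j)) :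
    Cexpr (gg n) p α ≥ 0 := by
  have hBX : ∀ x ∈ Finset.univ.biUnion α, Sum.isRight x = true := by
    intro x hx
    obtain ⟨i, _, hxi⟩ := Finset.mem_biUnion.mp hx
    exact hX i x hxi
  set K := (Finset.univ.biUnion α).card with hK
  have hKsum : K = ∑ i, (α i).card := Finset.card_biUnion (fun i _ j _ hij => hd i j hij)
  have hKn : K ≤ n := by
    have h1 := kk_le (Finset.univ.biUnion α)
    rwa [kk_right hBX] at h1
  set m₁ := (Finset.univ.filter (fun i => (α i).card = 1)).card with hm₁
  have hm1p : m₁ ≤ p := by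
    have := Finset.card_filter_le Finset.univ (fun i => (α i).card = 1)
    simpa using this
  have hkey : K + m₁ + 1 ≤ p + n := by
    by_cases hm : m₁ = p
    · have huniv : Finset.univ.filter (fun i => (α i).card = 1) = Finset.univ := by
        apply Finset.eq_univ_of_card
        simpa using hm
      have hall : ∀ i, (α i).card = 1 := by
        intro i
        have hi : i ∈ Finset.univ.filter (fun i => (α i).card = 1) := by
          rw [huniv]; exact Finset.mem_univ i
        exact (Finset.mem_filter.mp hi).2
      have hKp : K = p := by
        rw [hKsum]
        simp [hall]
      omega
    · have : m₁ < p := lt_of_le_of_ne hm1p hm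
      omega
  unfold Cexpr
  have e1 : ∀ i, cmi (gg n) {Sum.inl 0} {Sum.inl 1} (α i) = Uf n ((α i).card) :=
    fun i => cmi_ab_eval (hX i)
  have e2 : ∀ i, gg n (α i) = 16 * ((α i).card : ℝ) := fun i => gg_eval_S (hX i)
  rw [Finset.sum_congr rfl (fun i _ => e1 i), Finset.sum_congr rfl (fun i _ => e2 i),
    cmi_abc_eval hn, gg_eval_S hBX, sumU]
  have hc1 : (∑ i, ((α i).card : ℝ)) = (K : ℝ) := by
    rw [hKsum]; push_cast; rfl
  have hc2 : (∑ i, 16 * ((α i).card : ℝ)) = 16 * (K : ℝ) := by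
    rw [← Finset.mul_sum, hc1]
  rw [hc1, hc2]
  have hcast : (K:ℝ) + (m₁:ℝ) + 1 ≤ (p:ℝ) + (n:ℝ) := by exact_mod_cast hkey
  ring_nf
  nlinarith [hcast]

lemma Cexpr_bad (hn : 2 ≤ n) :
    Cexpr (gg n) n (fun i => ({Sum.inr i} : Finset (Idx n))) < 0 := by
  have hX : ∀ i : Fin n, ∀ x ∈ ({Sum.inr i} : Finset (Idx n)), Sum.isRight x = true := by
    intro i x hx
    rw [Finset.mem_singleton.mp hx]
    rfl
  unfold Cexpr
  have e1 : ∀ i : Fin n, cmi (gg n) {Sum.inl 0} {Sum.inl 1} ({Sum.inr i} : Finset (Idx n))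
      = 2*(n:ℝ)-3 := by
    intro i
    rw [cmi_ab_eval (hX i)]
    simp only [Finset.card_singleton]
    unfold Uf
    norm_num
    ring
  have e2 : ∀ i : Fin n, gg n ({Sum.inr i} : Finset (Idx n)) = 16 := by
    intro i
    rw [gg_eval_S (hX i)]
    simp
  have hBU : Finset.univ.biUnion (fun i : Fin n => ({Sum.inr i} : Finset (Idx n)))
      = Finset.univ.map ⟨Sum.inr, Sum.inr_injective⟩ := by
    ext x
    simp [Finset.mem_biUnion, eq_comm]
  have e3 : gg n (Finset.univ.biUnion (fun i : Fin n => ({Sum.inr i} : Finset (Idx n))))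
      = 16 * (n:ℝ) := by
    rw [hBU, gg_eval_S (by intro x hx; simp at hx; obtain ⟨i, rfl⟩ := hx; rfl)]
    simp
  rw [Finset.sum_congr rfl (fun i _ => e1 i), Finset.sum_congr rfl (fun i _ => e2 i),
    cmi_abc_eval hn, e3]
  rw [Finset.sum_const, Finset.sum_const, Finset.card_univ]
  simp only [Fintype.card_fin, nsmul_eq_mul]
  have : (n:ℝ)*(2*(n:ℝ)-3) - ((n:ℝ)-1)*(2*(n:ℝ)-1) = -1 := by ring
  nlinarith [this]

end
end CnAux

open CnAux in
/-- For each `n ≥ 2` there is a submodular, monotone set function `g` with `g(∅) = 0`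
satisfying the constraints `g(a:c|b) = g(b:c|a) = 0` and every instance of `C_p` for every
`p ≠ n`, yet violating the standard instance of `C_n` (on `α_i = {x_i}`). Consequently,
no function satisfying the basic inequalities, the constraints and all those instances of
`{C_p}_{p ≠ n}` need satisfy `C_n`, so `C_n` is not a positive combination of them. -/
theorem Cn_independent (n : ℕ) (hn : 2 ≤ n) :
    (∃ g : Finset (Idx n) → ℝ,
      g ∅ = 0 ∧ Submodular g ∧ (∀ α β : Finset (Idx n), α ⊆ β → g α ≤ g β) ∧
      cmi g {Sum.inl 0} {Sum.inl 2} {Sum.inl 1} = 0 ∧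
      cmi g {Sum.inl 1} {Sum.inl 2} {Sum.inl 0} = 0 ∧
      (∀ (p : ℕ), p ≠ n → ∀ α : Fin p → Finset (Idx n),
        (∀ i, ∀ x ∈ α i, x.isRight = true) →
        (∀ i j, i ≠ j → Disjoint (α i) (α j)) →
        Cexpr g p α ≥ 0) ∧
      Cexpr g n (fun i => {Sum.inr i}) < 0) ∧
    ¬ (∀ g : Finset (Idx n) → ℝ,
        g ∅ = 0 → Submodular g → (∀ α β : Finset (Idx n), α ⊆ β → g α ≤ g β) →
        cmi g {Sum.inl 0} {Sum.inl 2} {Sum.inl 1} = 0 →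
        cmi g {Sum.inl 1} {Sum.inl 2} {Sum.inl 0} = 0 →
        (∀ (p : ℕ), p ≠ n → ∀ α : Fin p → Finset (Idx n),
          (∀ i, ∀ x ∈ α i, x.isRight = true) →
          (∀ i j, i ≠ j → Disjoint (α i) (α j)) →
          Cexpr g p α ≥ 0) →
        Cexpr g n (fun i => {Sum.inr i}) ≥ 0) := by
  have hsub : Submodular (CnAux.gg n) := by
    intro M₁ M₂
    exact submodular_of_local _ (CnAux.gg_local hn) M₁ M₂
  have hmono : ∀ α β : Finset (Idx n), α ⊆ β → CnAux.gg n α ≤ CnAux.gg n β := by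
    intro A B hAB
    exact monotone_of_local _ (CnAux.gg_mono_step hn) A B hAB
  have hge : ∀ (p : ℕ), p ≠ n → ∀ α : Fin p → Finset (Idx n),
      (∀ i, ∀ x ∈ α i, x.isRight = true) →
      (∀ i j, i ≠ j → Disjoint (α i) (α j)) →
      Cexpr (CnAux.gg n) p α ≥ 0 := fun p hp α hX hd => CnAux.Cexpr_ge hn p hp α hX hd
  refine ⟨⟨CnAux.gg n, CnAux.gg_empty, hsub, hmono, CnAux.cmi_acb_eval hn,
    CnAux.cmi_bca_eval hn, hge, CnAux.Cexpr_bad hn⟩, ?_⟩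
  intro H
  have := H (CnAux.gg n) CnAux.gg_empty hsub hmono (CnAux.cmi_acb_eval hn)
    (CnAux.cmi_bca_eval hn) hge
  linarith [CnAux.Cexpr_bad hn]
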